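/- There exists a 2-extendible independence system that is not a good system: the independence system on ground set {a₁,a₂,b₁,b₂,b₃,b₄} whose maximal sets (bases) are A={a₁,a₂}, B={b₁,b₂,b₃,b₄}, C={a₁,b₃,b₄}, D={a₂,b₃,b₄} is 2-extendible, but for the bit-function w with w=2 on {a₁,a₂,b₁} and w=1 on {b₂,b₃,b₄}, the unique lexicographically maximal independent set A satisfies w(A)=4 < 5 = w(B), so A is not weight-maximal. -/

import Mathlib

set_option maxRecDepth 10000

/-- The weights of the elements of `S`, sorted in decreasing order. -/
noncomputable def sortedDesc {E : Type*} (w : E → ℝ) (S : Finset E) : List ℝ :=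
  (S.val.map w).sort (· ≥ ·)

/-- `S` is `w`-lexicographically larger than `T`. -/
def LexGt {E : Type*} (w : E → ℝ) (S T : Finset E) : Prop :=
  List.Lex (· < ·) (sortedDesc w T) (sortedDesc w S)

/-- `S` is a lexicographically maximal independent set of the system `I`. -/
def LexMaximal {E : Type*} (I : Finset E → Prop) (w : E → ℝ) (S : Finset E) : Prop :=
  I S ∧ ∀ T, I T → ¬ LexGt w T S

/-- The independence system on `{a₁,a₂,b₁,b₂,b₃,b₄}` (encoded as `Fin 6`, with
`a₁=0, a₂=1, b₁=2, b₂=3, b₃=4, b₄=5`) whose bases are `A={a₁,a₂}`, `B={b₁,b₂,b₃,b₄}`,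
`C={a₁,b₃,b₄}`, `D={a₂,b₃,b₄}`. -/
def Istar (S : Finset (Fin 6)) : Prop :=
  S ⊆ {0, 1} ∨ S ⊆ {2, 3, 4, 5} ∨ S ⊆ {0, 4, 5} ∨ S ⊆ {1, 4, 5}

/-- The bit-function taking value `2` on `{a₁,a₂,b₁}` and `1` on `{b₂,b₃,b₄}`. -/
def wstar (e : Fin 6) : ℝ := if e = 0 ∨ e = 1 ∨ e = 2 then 2 else 1

instance : DecidablePred Istar := fun S => by unfold Istar; infer_instance

lemma wstar_le_two (e : Fin 6) : wstar e ≤ 2 := by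
  unfold wstar; split <;> norm_num

lemma wstar_eq_two (e : Fin 6) : wstar e = 2 ↔ (e = 0 ∨ e = 1 ∨ e = 2) := by
  unfold wstar; split <;> rename_i h <;> simp [h] <;> norm_num

lemma mem_sortedDesc_le (S : Finset (Fin 6)) (x : ℝ) (hx : x ∈ sortedDesc wstar S) :
    x ≤ 2 := by
  rw [sortedDesc, Multiset.mem_sort] at hx
  obtain ⟨e, _, rfl⟩ := Multiset.mem_map.mp hx
  exact wstar_le_two e

lemma countP_sortedDesc (S : Finset (Fin 6)) :
    (sortedDesc wstar S).countP (fun x => decide (x = 2)) =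
      (S.filter (fun e => wstar e = 2)).card := by
  have h1 := Multiset.coe_countP (fun x : ℝ => x = 2) (sortedDesc wstar S)
  rw [show ((sortedDesc wstar S : List ℝ) : Multiset ℝ) = S.val.map wstar from
    Multiset.sort_eq _ _] at h1
  rw [← h1, Multiset.countP_map, Finset.card, Finset.filter_val]

lemma length_sortedDesc (S : Finset (Fin 6)) :
    (sortedDesc wstar S).length = S.card := by
  rw [sortedDesc, Multiset.length_sort, Multiset.card_map]; rfl

lemma lex_of_count_le_one (l : List ℝ) (h1 : ∀ x ∈ l, x ≤ 2)
    (h2 : l.countP (fun x => decide (x = 2)) ≤ 1) : List.Lex (· < ·) l [2, 2] := by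
  match l with
  | [] => exact List.Lex.nil
  | a :: t =>
    rcases lt_or_eq_of_le (h1 a List.mem_cons_self) with h | h
    · exact List.Lex.rel h
    · subst h
      have ht : t.countP (fun x => decide (x = (2:ℝ))) = 0 := by
        rw [List.countP_cons] at h2
        simp only [decide_eq_true_eq, if_true] at h2 ⊢
        omega
      have ht' : ∀ x ∈ t, x ≠ (2:ℝ) := by
        intro x hx
        have := List.countP_eq_zero.mp ht x hx
        simpa using this
      match t with
      | [] => exact List.Lex.cons List.Lex.nil
      | b :: t' =>
        have hb : b < 2 := lt_of_le_of_ne (h1 b (by simp)) (ht' b (by simp))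
        exact List.Lex.cons (List.Lex.rel hb)

lemma of_lex_22 (l : List ℝ) (h1 : ∀ x ∈ l, x ≤ 2)
    (h : List.Lex (· < ·) [(2:ℝ), 2] l) :
    2 ≤ l.countP (fun x => decide (x = 2)) ∧ 3 ≤ l.length := by
  cases h with
  | rel h => exact absurd (h1 _ List.mem_cons_self) (not_le.mpr h)
  | cons h =>
    rename_i l' 
    cases h with
    | rel h => exact absurd (h1 _ (by simp)) (not_le.mpr h)
    | cons h =>
      rename_i l''
      cases h with
      | nil =>
        rename_i c r
        constructor
        · simp [List.countP_cons]
        · simp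

lemma sortedDesc_01 : sortedDesc wstar {0, 1} = [2, 2] := by
  refine (fun hp h1 h2 => List.Perm.eq_of_pairwise' (r := (· ≥ · : ℝ → ℝ → Prop)) h1 h2 hp) ?_ ?_ ?_
  · rw [← Multiset.coe_eq_coe]
    rw [show ((sortedDesc wstar {0,1} : List ℝ) : Multiset ℝ) = ({0,1} : Finset (Fin 6)).val.map wstar from Multiset.sort_eq _ _]
    have hv : ({0, 1} : Finset (Fin 6)).val = (0 ::ₘ {1} : Multiset (Fin 6)) := by decide
    rw [hv]
    simp [wstar]
    norm_num
    rfl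
  · exact Multiset.pairwise_sort _ _
  · norm_num [List.pairwise_cons]

lemma filter_card_le_one (S : Finset (Fin 6)) (hS : Istar S) (hne : S ≠ {0, 1}) :
    (S.filter (fun e => wstar e = 2)).card ≤ 1 := by
  have key : ∀ x : Fin 6, S.filter (fun e => wstar e = 2) ⊆ {x} →
      (S.filter (fun e => wstar e = 2)).card ≤ 1 := by
    intro x h
    calc (S.filter (fun e => wstar e = 2)).card ≤ ({x} : Finset (Fin 6)).card :=
          Finset.card_le_card h
      _ = 1 := Finset.card_singleton x
  rcases hS with h | h | h | h
  · have hss : S ⊂ {0, 1} := lt_of_le_of_ne h hne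
    have hc : S.card < 2 := by
      have := Finset.card_lt_card hss
      simpa using this
    calc (S.filter (fun e => wstar e = 2)).card ≤ S.card := Finset.card_filter_le _ _
      _ ≤ 1 := by omega
  · apply key 2
    intro a ha
    rw [Finset.mem_filter, wstar_eq_two] at ha
    have key2 : ∀ a : Fin 6, a ∈ ({2,3,4,5} : Finset (Fin 6)) → (a = 0 ∨ a = 1 ∨ a = 2) →
        a ∈ ({2} : Finset (Fin 6)) := by decide
    exact key2 a (h ha.1) ha.2
  · apply key 0
    intro a ha
    rw [Finset.mem_filter, wstar_eq_two] at ha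
    have key2 : ∀ a : Fin 6, a ∈ ({0,4,5} : Finset (Fin 6)) → (a = 0 ∨ a = 1 ∨ a = 2) →
        a ∈ ({0} : Finset (Fin 6)) := by decide
    exact key2 a (h ha.1) ha.2
  · apply key 1
    intro a ha
    rw [Finset.mem_filter, wstar_eq_two] at ha
    have key2 : ∀ a : Fin 6, a ∈ ({1,4,5} : Finset (Fin 6)) → (a = 0 ∨ a = 1 ∨ a = 2) →
        a ∈ ({1} : Finset (Fin 6)) := by decide
    exact key2 a (h ha.1) ha.2

lemma no_beat (T : Finset (Fin 6)) (hT : Istar T) :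
    ¬ List.Lex (· < ·) [(2:ℝ), 2] (sortedDesc wstar T) := by
  intro h
  obtain ⟨hc, hl⟩ := of_lex_22 _ (mem_sortedDesc_le T) h
  rw [countP_sortedDesc] at hc
  rw [length_sortedDesc] at hl
  by_cases hne : T = {0, 1}
  · subst hne
    simp at hl
  · have := filter_card_le_one T hT hne
    omega

/-- The system `Istar` is 2-extendible but not good: `A = {a₁,a₂}` is the unique
lexicographically maximal independent set for the bit-function `wstar`, yet
`wstar(A) = 4 < 5 = wstar(B)`, so `A` is not weight-maximal. -/
theorem stmt_12 :
    (∀ X Y : Finset (Fin 6), Istar X → Istar Y → ∀ y ∈ Y \ X,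
      ∃ Z ⊆ X \ Y, Z.card ≤ 2 ∧ Istar (insert y X \ Z))
    ∧ LexMaximal Istar wstar {0, 1}
    ∧ (∀ S : Finset (Fin 6), LexMaximal Istar wstar S → S = {0, 1})
    ∧ (∑ e ∈ ({0, 1} : Finset (Fin 6)), wstar e = 4)
    ∧ (∑ e ∈ ({2, 3, 4, 5} : Finset (Fin 6)), wstar e = 5)
    ∧ Istar {2, 3, 4, 5} := by
  refine ⟨by decide, ⟨Or.inl (Finset.Subset.refl _), ?_⟩, ?_, ?_, ?_,
    Or.inr (Or.inl (Finset.Subset.refl _))⟩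
  · intro T hT h
    rw [LexGt, sortedDesc_01] at h
    exact no_beat T hT h
  · intro S hS
    by_contra hne
    apply hS.2 {0, 1} (Or.inl (Finset.Subset.refl _))
    rw [LexGt, sortedDesc_01]
    apply lex_of_count_le_one _ (mem_sortedDesc_le S)
    rw [countP_sortedDesc]
    exact filter_card_le_one S hS.1 hne
  · rw [show ({0,1} : Finset (Fin 6)) = insert 0 {1} from rfl,
      Finset.sum_insert (by decide), Finset.sum_singleton]
    norm_num [wstar]
  · rw [show ({2,3,4,5} : Finset (Fin 6)) = insert 2 (insert 3 (insert 4 {5})) from rfl,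
      Finset.sum_insert (by decide), Finset.sum_insert (by decide),
      Finset.sum_insert (by decide), Finset.sum_singleton]
    rw [show wstar 2 = 2 from by norm_num [wstar],
      show wstar 3 = 1 from by norm_num [wstar, show ¬((3:Fin 6)=0∨(3:Fin 6)=1∨(3:Fin 6)=2) from by decide],
      show wstar 4 = 1 from by norm_num [wstar, show ¬((4:Fin 6)=0∨(4:Fin 6)=1∨(4:Fin 6)=2) from by decide],
      show wstar 5 = 1 from by norm_num [wstar, show ¬((5:Fin 6)=0∨(5:Fin 6)=1∨(5:Fin 6)=2) from by decide]]
    norm_num
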